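/- Along the gradient flow of the exponential loss, if at time t the function f(W(t)) separates the data (yₙ f(W(t); xₙ) > 0 for all n) and the gradient is nonzero, then the squared Euclidean norm of the weights is strictly increasing at t: d/dt ‖W(t)‖² > 0. -/

import Mathlib

open Real
open scoped RealInnerProductSpace

/-- Along the gradient flow of the exponential loss, when the data is separated
at time t and the gradient is nonzero, the squared norm of the weights is
strictly increasing. -/
theorem norm_increasing_along_gradient_flow {d N K : ℕ} (hN : 0 < N) (hK : 1 ≤ K)
    (f : Fin N → EuclideanSpace ℝ (Fin d) → ℝ)
    (hf : ∀ n, Differentiable ℝ (f n))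
    (hhom : ∀ n, ∀ l : ℝ, 0 < l → ∀ W, f n (l • W) = l ^ K * f n W)
    (y : Fin N → ℝ) (hy : ∀ n, y n = 1 ∨ y n = -1)
    (L : EuclideanSpace ℝ (Fin d) → ℝ)
    (hL : L = fun W => ∑ n, exp (-(y n * f n W)))
    (W : ℝ → EuclideanSpace ℝ (Fin d)) (hW : Differentiable ℝ W)
    (hflow : ∀ t, deriv W t = -gradient L (W t))
    (t : ℝ)
    (hsep : ∀ n, 0 < y n * f n (W t))
    (hgrad : gradient L (W t) ≠ 0) :
    0 < deriv (fun s => ‖W s‖ ^ 2) t := by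
  set x := W t with hx
  -- L is differentiable
  have hLdiff : Differentiable ℝ L := by
    rw [hL]
    apply Differentiable.fun_sum
    intro n _
    exact (((hf n).const_mul (y n)).neg).exp
  -- A := directional derivative of L at x in direction x
  set A : ℝ := fderiv ℝ L x x with hA
  -- chain rule: l ↦ L (l • x) has derivative A at 1
  have hsmul : HasDerivAt (fun l : ℝ => l • x) x 1 := by
    simpa using (hasDerivAt_id (1:ℝ)).smul_const x
  have h1 : HasDerivAt (fun l : ℝ => L (l • x)) A 1 := by
    have := (hLdiff ((1:ℝ) • x)).hasFDerivAt.comp_hasDerivAt 1 hsmul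
    simp only [one_smul] at this
    exact this
  -- the explicit formula near 1
  set S : ℝ := ∑ n, exp (-(y n * f n x)) * (-(y n * ((K : ℝ) * f n x))) with hS
  have h2 : HasDerivAt (fun l : ℝ => ∑ n, exp (-(y n * (l ^ K * f n x)))) S 1 := by
    rw [hS]
    apply HasDerivAt.fun_sum
    intro n _
    have hp : HasDerivAt (fun l : ℝ => l ^ K) (K : ℝ) 1 := by
      simpa using hasDerivAt_pow K (1:ℝ)
    have := (((hp.mul_const (f n x)).const_mul (y n)).neg).exp
    simpa [mul_assoc] using this
  have heq : (fun l : ℝ => L (l • x)) =ᶠ[nhds (1:ℝ)]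
      (fun l : ℝ => ∑ n, exp (-(y n * (l ^ K * f n x)))) := by
    filter_upwards [Ioi_mem_nhds (by norm_num : (0:ℝ) < 1)] with l hl
    rw [hL]
    simp only
    congr 1
    ext n
    rw [hhom n l hl x]
  have h1' : HasDerivAt (fun l : ℝ => ∑ n, exp (-(y n * (l ^ K * f n x)))) A 1 :=
    h1.congr_of_eventuallyEq heq.symm
  have hAS : A = S := h1'.unique h2
  -- gradient inner product
  have hginner : ⟪gradient L x, x⟫ = A := by
    rw [gradient]
    exact InnerProductSpace.toDual_symm_apply
  -- derivative of squared norm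
  have hWd : HasDerivAt W (deriv W t) t := (hW t).hasDerivAt
  have hsq : HasDerivAt (fun s => ‖W s‖ ^ 2)
      (⟪W t, deriv W t⟫ + ⟪deriv W t, W t⟫) t := by
    have := hWd.inner ℝ hWd
    refine HasDerivAt.congr_of_eventuallyEq this ?_
    filter_upwards with s
    rw [real_inner_self_eq_norm_sq]
  rw [hsq.deriv]
  have hg2 : ⟪W t, deriv W t⟫ = -A := by
    rw [hflow t, inner_neg_right, ← hx, real_inner_comm, hginner]
  have hg3 : ⟪deriv W t, W t⟫ = -A := by
    rw [hflow t, inner_neg_left, ← hx, hginner]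
  rw [hg2, hg3]
  have hKpos : (0:ℝ) < (K:ℝ) := by
    exact_mod_cast lt_of_lt_of_le one_pos hK
  have hpos : 0 < ∑ n, exp (-(y n * f n x)) * (y n * ((K : ℝ) * f n x)) := by
    apply Finset.sum_pos
    · intro n _
      apply mul_pos (exp_pos _)
      rw [show y n * ((K:ℝ) * f n x) = (K:ℝ) * (y n * f n x) by ring]
      exact mul_pos hKpos (hsep n)
    · exact Finset.univ_nonempty_iff.mpr ⟨⟨0, hN⟩⟩
  have hSneg : S < 0 := by
    rw [hS]
    have : ∑ n, exp (-(y n * f n x)) * (-(y n * ((K : ℝ) * f n x)))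
        = -∑ n, exp (-(y n * f n x)) * (y n * ((K : ℝ) * f n x)) := by
      rw [← Finset.sum_neg_distrib]
      congr 1; ext n; ring
    rw [this]
    linarith
  rw [hAS]
  linarith
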